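/- arXiv:1703.00532 — 3 statements merged into one kernel-verified Lean document; each statement's English description precedes it below -/
import Mathlib

section
/- Let M_j > 0 for j ∈ G and consider the swing dynamics M_j ω̇_j = −p_j^L + s_j − d_j^u − Σ_{k:j→k} p_{jk} + Σ_{i:i→j} p_{ij} for j ∈ G, with 0 = −p_j^L + s_j − d_j^u − Σ_{k:j→k} p_{jk} + Σ_{i:i→j} p_{ij} for j ∈ L, and equilibrium (ω*, s*, d^{u,*}, p*) with ω*_i = ω*_j for all edges. Then V_F(ω) = ½ Σ_{j∈G} M_j(ω_j − ω*_j)² satisfies V̇_F = Σ_{j∈N} [(ω_j − ω*_j)(s_j − s*_j) + (ω_j − ω*_j)(−d_j^u + d_j^{u,*})] + Σ_{(i,j)∈E} (p_{ij} − p*_{ij})(ω_j − ω_i) along trajectories. -/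
open Finset

lemma fiber_sum_aux {V E : Type} [Fintype V] [Fintype E] [DecidableEq V]
    (f : E → V) (q : E → ℝ) (x : V → ℝ) :
    ∑ e, q e * x (f e) = ∑ j, (∑ e ∈ univ.filter (fun e => f e = j), q e) * x j := by
  rw [← Finset.sum_fiberwise_of_maps_to (fun e _ => Finset.mem_univ (f e))
      (fun e => q e * x (f e))]
  refine Finset.sum_congr rfl fun j _ => ?_
  rw [Finset.sum_mul]
  refine Finset.sum_congr rfl fun e he => ?_
  rw [(Finset.mem_filter.mp he).2]

theorem stmt_8 {V E : Type} [Fintype V] [Fintype E] [DecidableEq V]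
    (src tgt : E → V) (Gset : Finset V)
    (M : V → ℝ) (hM : ∀ j ∈ Gset, 0 < M j)
    (pL : V → ℝ)
    (ω s du : V → ℝ → ℝ) (p : E → ℝ → ℝ)
    (ωstar sstar dustar : V → ℝ) (pstar : E → ℝ) (t : ℝ)
    -- swing dynamics at generation buses
    (hswing : ∀ j ∈ Gset, HasDerivAt (ω j)
      ((-pL j + s j t - du j t
        - (∑ e ∈ univ.filter (fun e => src e = j), p e t)
        + (∑ e ∈ univ.filter (fun e => tgt e = j), p e t)) / M j) t)
    -- algebraic equations at load buses
    (hload : ∀ j ∉ Gset, (0 : ℝ) = -pL j + s j t - du j t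
        - (∑ e ∈ univ.filter (fun e => src e = j), p e t)
        + (∑ e ∈ univ.filter (fun e => tgt e = j), p e t))
    -- equilibrium relations
    (heq : ∀ j : V, (0 : ℝ) = -pL j + sstar j - dustar j
        - (∑ e ∈ univ.filter (fun e => src e = j), pstar e)
        + (∑ e ∈ univ.filter (fun e => tgt e = j), pstar e))
    (hωeq : ∀ e : E, ωstar (src e) = ωstar (tgt e)) :
    HasDerivAt (fun τ => (1/2) * ∑ j ∈ Gset, M j * (ω j τ - ωstar j)^2)
      ((∑ j, ((ω j t - ωstar j) * (s j t - sstar j)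
            + (ω j t - ωstar j) * (-(du j t) - (-(dustar j)))))
        + ∑ e, (p e t - pstar e) * (ω (tgt e) t - ω (src e) t)) t := by
  set x : V → ℝ := fun j => ω j t - ωstar j with hx
  set f : V → ℝ := fun j => -pL j + s j t - du j t
        - (∑ e ∈ univ.filter (fun e => src e = j), p e t)
        + (∑ e ∈ univ.filter (fun e => tgt e = j), p e t) with hf
  -- the derivative
  have hd : HasDerivAt (fun τ => (1/2) * ∑ j ∈ Gset, M j * (ω j τ - ωstar j)^2)
      (∑ j ∈ Gset, x j * f j) t := by
    have h1 : HasDerivAt (fun τ => ∑ j ∈ Gset, M j * (ω j τ - ωstar j)^2)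
        (∑ j ∈ Gset, M j * ((2:ℕ) * (ω j t - ωstar j)^(2-1) * (f j / M j))) t := by
      apply HasDerivAt.fun_sum
      intro j hj
      exact (((hswing j hj).sub_const (ωstar j)).pow 2).const_mul (M j)
    have h2 := h1.const_mul (1/2 : ℝ)
    refine h2.congr_deriv ?_
    rw [Finset.mul_sum]
    refine Finset.sum_congr rfl fun j hj => ?_
    have hMj : M j ≠ 0 := (hM j hj).ne'
    field_simp
    ring
  -- extend sum to all vertices
  have hall : (∑ j ∈ Gset, x j * f j) = ∑ j, x j * f j := by
    refine Finset.sum_subset (Finset.subset_univ Gset) fun j _ hj => ?_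
    simp only [hf]
    rw [← hload j hj]
    ring
  -- the value identity
  have hval : (∑ j, x j * f j)
      = ((∑ j, (x j * (s j t - sstar j) + x j * (-(du j t) - (-(dustar j)))))
        + ∑ e, (p e t - pstar e) * (ω (tgt e) t - ω (src e) t)) := by
    have htg : ∑ e, (p e t - pstar e) * x (tgt e)
        = ∑ j, (∑ e ∈ univ.filter (fun e => tgt e = j), (p e t - pstar e)) * x j :=
      fiber_sum_aux tgt (fun e => p e t - pstar e) x
    have hsr : ∑ e, (p e t - pstar e) * x (src e)
        = ∑ j, (∑ e ∈ univ.filter (fun e => src e = j), (p e t - pstar e)) * x j :=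
      fiber_sum_aux src (fun e => p e t - pstar e) x
    have hedge : ∑ e, (p e t - pstar e) * (ω (tgt e) t - ω (src e) t)
        = ∑ j, ((∑ e ∈ univ.filter (fun e => tgt e = j), (p e t - pstar e)) * x j
              - (∑ e ∈ univ.filter (fun e => src e = j), (p e t - pstar e)) * x j) := by
      rw [Finset.sum_sub_distrib, ← htg, ← hsr, ← Finset.sum_sub_distrib]
      refine Finset.sum_congr rfl fun e _ => ?_
      have := hωeq e
      simp only [hx]
      ring_nf
      rw [this]
      ring
    rw [hedge, ← Finset.sum_add_distrib]
    refine Finset.sum_congr rfl fun j _ => ?_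
    simp only [hf, Finset.sum_sub_distrib]
    linear_combination (-(x j)) * heq j
  rw [hall, hval] at hd
  convert hd using 2
end

section
/- Consider the power command dynamics γ_{ij} ψ̇_{ij} = p_i^c − p_j^c for (i,j) ∈ Ẽ and γ_j ṗ_j^c = −(s_j − p_j^L) − Σ_{k:j→k} ψ_{jk} + Σ_{i:i→j} ψ_{ij} for j ∈ N, with γ_j, γ_{ij} > 0. Then along trajectories, the function V_C(p^c) + V_ψ(ψ) := ½ Σ_j γ_j(p_j^c − p_j^{c,*})² + ½ Σ_{(i,j)∈Ẽ} γ_{ij}(ψ_{ij} − ψ*_{ij})² satisfies d/dt (V_C + V_ψ) = Σ_{j∈N} (p_j^c − p_j^{c,*})(−s_j + s*_j), where (p^{c,*}, ψ*, s*) is any equilibrium of these dynamics. -/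
open Finset

theorem stmt_9 {V E : Type} [Fintype V] [Fintype E] [DecidableEq V]
    (src tgt : E → V)
    (γ : V → ℝ) (hγ : ∀ j, 0 < γ j) (γe : E → ℝ) (hγe : ∀ e, 0 < γe e)
    (pL : V → ℝ)
    (pc : V → ℝ → ℝ) (ψ : E → ℝ → ℝ) (s : V → ℝ → ℝ)
    (pcstar : V → ℝ) (ψstar : E → ℝ) (sstar : V → ℝ) (t : ℝ)
    -- power command dynamics
    (hψ : ∀ e, HasDerivAt (ψ e) ((pc (src e) t - pc (tgt e) t) / γe e) t)
    (hpc : ∀ j, HasDerivAt (pc j)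
      ((-(s j t - pL j)
        - (∑ e ∈ univ.filter (fun e => src e = j), ψ e t)
        + (∑ e ∈ univ.filter (fun e => tgt e = j), ψ e t)) / γ j) t)
    -- equilibrium relations
    (heq : ∀ j : V, (0 : ℝ) = -(sstar j - pL j)
        - (∑ e ∈ univ.filter (fun e => src e = j), ψstar e)
        + (∑ e ∈ univ.filter (fun e => tgt e = j), ψstar e))
    (hpceq : ∀ e : E, pcstar (src e) = pcstar (tgt e)) :
    HasDerivAt (fun τ =>
        (1/2) * ∑ j, γ j * (pc j τ - pcstar j)^2
        + (1/2) * ∑ e, γe e * (ψ e τ - ψstar e)^2)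
      (∑ j, (pc j t - pcstar j) * (-(s j t) + sstar j)) t := by
  have hγ' : ∀ j, γ j ≠ 0 := fun j => (hγ j).ne'
  have hγe' : ∀ e, γe e ≠ 0 := fun e => (hγe e).ne'
  set X : V → ℝ := fun j =>
    -(s j t - pL j) - (∑ e ∈ univ.filter (fun e => src e = j), ψ e t)
      + (∑ e ∈ univ.filter (fun e => tgt e = j), ψ e t) with hX
  have hV : HasDerivAt (fun τ =>
      (1/2) * ∑ j, γ j * (pc j τ - pcstar j)^2
      + (1/2) * ∑ e, γe e * (ψ e τ - ψstar e)^2)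
      ((1/2) * ∑ j, γ j * (2 * (pc j t - pcstar j) * (X j / γ j))
       + (1/2) * ∑ e, γe e * (2 * (ψ e t - ψstar e) *
          ((pc (src e) t - pc (tgt e) t) / γe e))) t := by
    apply HasDerivAt.add
    · apply HasDerivAt.const_mul
      apply HasDerivAt.fun_sum
      intro j _
      have h1 := ((hpc j).sub_const (pcstar j)).fun_pow 2
      have h2 := h1.const_mul (γ j)
      convert h2 using 1
      rfl
      simp only [hX]
      push_cast
      ring
    · apply HasDerivAt.const_mul
      apply HasDerivAt.fun_sum
      intro e _
      have h1 := ((hψ e).sub_const (ψstar e)).pow 2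
      have h2 := h1.const_mul (γe e)
      simpa [mul_assoc] using h2
  convert hV using 1
  have fib : ∀ (f : E → V) (a : V → ℝ) (b : E → ℝ),
      (∑ j, ∑ e ∈ univ.filter (fun e => f e = j), a j * b e)
        = ∑ e, a (f e) * b e := by
    intro f a b
    rw [← Finset.sum_fiberwise univ f (fun e => a (f e) * b e)]
    exact Finset.sum_congr rfl fun j _ => Finset.sum_congr rfl fun e he => by
      rw [(Finset.mem_filter.mp he).2]
  have ha : ∀ j, γ j * (2 * (pc j t - pcstar j) * (X j / γ j))
      = 2 * ((pc j t - pcstar j) * X j) := by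
    intro j
    rw [div_eq_mul_inv]
    have h := mul_inv_cancel₀ (hγ' j)
    linear_combination (2 * (pc j t - pcstar j) * X j) * h
  have hb : ∀ e, γe e * (2 * (ψ e t - ψstar e) * ((pc (src e) t - pc (tgt e) t) / γe e))
      = 2 * ((ψ e t - ψstar e) * (pc (src e) t - pc (tgt e) t)) := by
    intro e
    rw [div_eq_mul_inv]
    have h := mul_inv_cancel₀ (hγe' e)
    linear_combination (2 * (ψ e t - ψstar e) * (pc (src e) t - pc (tgt e) t)) * h
  rw [Finset.sum_congr rfl (fun j _ => ha j), Finset.sum_congr rfl (fun e _ => hb e),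
      ← Finset.mul_sum, ← Finset.mul_sum]
  have hXj : ∀ j, (pc j t - pcstar j) * X j
      = (pc j t - pcstar j) * (-(s j t) + sstar j)
        - (∑ e ∈ univ.filter (fun e => src e = j), (pc j t - pcstar j) * (ψ e t - ψstar e))
        + (∑ e ∈ univ.filter (fun e => tgt e = j), (pc j t - pcstar j) * (ψ e t - ψstar e)) := by
    intro j
    have hpl : pL j = sstar j + (∑ e ∈ univ.filter (fun e => src e = j), ψstar e)
        - (∑ e ∈ univ.filter (fun e => tgt e = j), ψstar e) := by linarith [heq j]
    have h1 : ∀ S : Finset E, (∑ e ∈ S, (pc j t - pcstar j) * (ψ e t - ψstar e))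
        = (pc j t - pcstar j) * ((∑ e ∈ S, ψ e t) - (∑ e ∈ S, ψstar e)) := by
      intro S
      rw [← Finset.mul_sum, Finset.sum_sub_distrib]
    rw [h1, h1]
    simp only [hX]
    rw [hpl]
    ring
  have hYe : ∀ e, (ψ e t - ψstar e) * (pc (src e) t - pc (tgt e) t)
      = (pc (src e) t - pcstar (src e)) * (ψ e t - ψstar e)
        - (pc (tgt e) t - pcstar (tgt e)) * (ψ e t - ψstar e) := by
    intro e
    linear_combination (ψ e t - ψstar e) * (hpceq e)
  rw [Finset.sum_congr rfl (fun j _ => hXj j), Finset.sum_congr rfl (fun e _ => hYe e)]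
  simp only [Finset.sum_add_distrib, Finset.sum_sub_distrib]
  rw [fib src (fun j => pc j t - pcstar j) (fun e => ψ e t - ψstar e),
      fib tgt (fun j => pc j t - pcstar j) (fun e => ψ e t - ψstar e)]
  ring
end

section
/- Let V_b(b, χ, ω) = ½ Σ_{j∈G} [ M_j((b_j − b*_j) − (ω_j − ω*_j))² + τ_j(χ_j − χ*_j)² ] with M_j, τ_j > 0, where trajectories satisfy τ_j χ̇_j = b_j − ω_j − p_j^c − χ_j, M_j ḃ_j = −χ_j + w_j, M_j ω̇_j = −p_j^L + w_j, and equilibria satisfy χ*_j = w*_j = p_j^L, b*_j = ω*_j + p_j^{c,*} + χ*_j. Then V̇_b = Σ_{j∈G} ( −(χ_j − χ*_j)[(p_j^c − p_j^{c,*}) + (χ_j − χ*_j)] ) along trajectories. -/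
theorem stmt_18 {G : Type} [Fintype G]
    (M τ : G → ℝ) (hM : ∀ j, 0 < M j) (hτ : ∀ j, 0 < τ j)
    (pL : G → ℝ)
    (b χ ω pc w : G → ℝ → ℝ)
    (bstar χstar ωstar pcstar : G → ℝ) (t : ℝ)
    -- observer and swing dynamics
    (hχdot : ∀ j, HasDerivAt (χ j) ((b j t - ω j t - pc j t - χ j t) / τ j) t)
    (hbdot : ∀ j, HasDerivAt (b j) ((-χ j t + w j t) / M j) t)
    (hωdot : ∀ j, HasDerivAt (ω j) ((-pL j + w j t) / M j) t)
    -- equilibrium relations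
    (hχstar : ∀ j, χstar j = pL j)
    (hbstar : ∀ j, bstar j = ωstar j + pcstar j + χstar j) :
    HasDerivAt (fun s => (1/2) * ∑ j,
        (M j * ((b j s - bstar j) - (ω j s - ωstar j))^2
          + τ j * (χ j s - χstar j)^2))
      (∑ j, (-(χ j t - χstar j) * ((pc j t - pcstar j) + (χ j t - χstar j)))) t := by
  have key : ∀ j, HasDerivAt
      (fun s => M j * ((b j s - bstar j) - (ω j s - ωstar j))^2
          + τ j * (χ j s - χstar j)^2)
      (2 * (-(χ j t - χstar j) * ((pc j t - pcstar j) + (χ j t - χstar j)))) t := by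
    intro j
    have h1 : HasDerivAt (fun s => (b j s - bstar j) - (ω j s - ωstar j))
        ((-χ j t + w j t) / M j - (-pL j + w j t) / M j) t :=
      (((hbdot j).sub_const (bstar j)).sub ((hωdot j).sub_const (ωstar j)))
    have h2 : HasDerivAt (fun s => χ j s - χstar j)
        ((b j t - ω j t - pc j t - χ j t) / τ j) t :=
      (hχdot j).sub_const (χstar j)
    have := ((h1.pow 2).const_mul (M j)).add ((h2.pow 2).const_mul (τ j))
    refine this.congr_deriv ?_
    have hMne : M j ≠ 0 := (hM j).ne'
    have hτne : τ j ≠ 0 := (hτ j).ne'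
    field_simp
    rw [hbstar j, hχstar j]
    ring
  have := HasDerivAt.const_mul (1/2 : ℝ)
    (HasDerivAt.fun_sum (u := Finset.univ) (fun j _ => key j))
  refine this.congr_deriv ?_
  rw [Finset.mul_sum]
  congr 1; ext j; ring
end
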